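/- For every pushdown system P = (Q, Γ, A, Δ) in push-pop normal form, setting ι(n, k) = n · k · ((n + k)^n + 1): for all e ∈ ℕ with e ≥ 1, all linked pairs (α, β), and all configurations qαβ^eγ of P such that qαβ^{e−d}γ ≁ qαβ^ω for all d ∈ [1, e], there is a β^ω-avoiding digging sequence (r₀, r₁, …, r_e) for (q, α, β) such that for every k ∈ ℕ and every interval [a, b] ⊆ [0, e] with b − a + 1 > ι(|P|, k), there are more than k pairwise non-bisimilar configurations in the set {r_d β^{e−d} γ | d ∈ [a, b]}. -/

import Mathlib

/-- Stack contents: finite (a list in `Γ*`) or infinite (a stream, used for `αβ^ω`). -/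
def SC (Γ : Type) : Type := List Γ ⊕ Stream' Γ

namespace SC

/-- Put one symbol on top of a stack content. -/
def cons {Γ : Type} (X : Γ) : SC Γ → SC Γ
  | Sum.inl l => Sum.inl (X :: l)
  | Sum.inr s => Sum.inr (Stream'.cons X s)

/-- Put a finite word on top of a stack content. -/
def push {Γ : Type} (γ : List Γ) : SC Γ → SC Γ
  | Sum.inl l => Sum.inl (γ ++ l)
  | Sum.inr s => Sum.inr (Stream'.appendStream' γ s)

end SC

/-- `listPow β i = β^i`, the `i`-fold concatenation of `β`. -/
def listPow {Γ : Type} (β : List Γ) : ℕ → List Γ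
  | 0 => []
  | n + 1 => β ++ listPow β n

/-- The infinite stack content `β^ω` (for nonempty `β`). -/
def cycSC {Γ : Type} (β : List Γ) (h : β ≠ []) : SC Γ := Sum.inr (Stream'.cycle β h)

/-- A pushdown system, given by its (finite) transition relation
`Δ ⊆ Q × Γ × A × Q × Γ*`. -/
structure PDS (Q Γ A : Type) where
  Δ : Finset (Q × Γ × A × Q × List Γ)

namespace PDS

variable {Q Γ A : Type}

/-- The size `|P| = |Q| + |Γ| + |A| + |Δ|` of a pushdown system. -/
def size (P : PDS Q Γ A) [Fintype Q] [Fintype Γ] [Fintype A] : ℕ :=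
  Fintype.card Q + Fintype.card Γ + Fintype.card A + P.Δ.card

/-- Push-pop normal form: every transition pushes a word of length at most 2. -/
def PushPop (P : PDS Q Γ A) : Prop := ∀ δ ∈ P.Δ, δ.2.2.2.2.length ≤ 2

/-- The `a`-labeled step relation on configurations: `pXσ →_a qγσ`. -/
def Step (P : PDS Q Γ A) (a : A) (s t : Q × SC Γ) : Prop :=
  ∃ p X q γ σ, (p, X, a, q, γ) ∈ P.Δ ∧ s = (p, SC.cons X σ) ∧ t = (q, SC.push γ σ)

/-- A step with some label. -/
def StepAny (P : PDS Q Γ A) (s t : Q × SC Γ) : Prop := ∃ a, P.Step a s t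

/-- Reachability `→*`. -/
def Reach (P : PDS Q Γ A) : (Q × SC Γ) → (Q × SC Γ) → Prop :=
  Relation.ReflTransGen P.StepAny

/-- `StepN P n s t` : there is a path of length exactly `n` from `s` to `t`. -/
def StepN (P : PDS Q Γ A) : ℕ → (Q × SC Γ) → (Q × SC Γ) → Prop
  | 0, s, t => s = t
  | n + 1, s, t => ∃ u, P.StepAny s u ∧ StepN P n u t

/-- `R` is a bisimulation. -/
def IsBisim (P : PDS Q Γ A) (R : (Q × SC Γ) → (Q × SC Γ) → Prop) : Prop :=
  ∀ s t, R s t → ∀ a,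
    (∀ s', P.Step a s s' → ∃ t', P.Step a t t' ∧ R s' t') ∧
    (∀ t', P.Step a t t' → ∃ s', P.Step a s s' ∧ R s' t')

/-- Bisimilarity `s ∼ t`. -/
def Bisim (P : PDS Q Γ A) (s t : Q × SC Γ) : Prop := ∃ R, P.IsBisim R ∧ R s t

/-- `eats_α(T) = { r | ∃ q ∈ T, qα →* r }`. -/
def eats (P : PDS Q Γ A) (α : List Γ) (T : Set Q) : Set Q :=
  {r | ∃ q ∈ T, P.Reach (q, Sum.inl α) (r, Sum.inl ([] : List Γ))}

/-- `(α, β)` (with `β` nonempty) is a linked pair if `eats_α = eats_{αβ}`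
and `eats_β = eats_{ββ}`. -/
def LinkedPair (P : PDS Q Γ A) (α β : List Γ) : Prop :=
  β ≠ [] ∧ P.eats α = P.eats (α ++ β) ∧ P.eats β = P.eats (β ++ β)

/-- Applying one concrete transition `δ = (p, X, a, q, γ)`. -/
def TStep (P : PDS Q Γ A) (δ : Q × Γ × A × Q × List Γ) (s t : Q × SC Γ) : Prop :=
  δ ∈ P.Δ ∧ ∃ σ, s = (δ.1, SC.cons δ.2.1 σ) ∧ t = (δ.2.2.2.1, SC.push δ.2.2.2.2 σ)

/-- `RunTo P ρ s t` : applying the sequence of transitions `ρ` starting from `s`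
yields `t`. -/
def RunTo (P : PDS Q Γ A) : List (Q × Γ × A × Q × List Γ) → (Q × SC Γ) → (Q × SC Γ) → Prop
  | [], s, t => s = t
  | δ :: ρ, s, t => ∃ u, P.TStep δ s u ∧ RunTo P ρ u t

/-- Bisimulation classes of configurations reachable from `s₀`
(the states of the bisimulation quotient of `L(P, s₀)`). -/
def classes (P : PDS Q Γ A) (s₀ : Q × SC Γ) : Set (Set (Q × SC Γ)) :=
  {c | ∃ s, P.Reach s₀ s ∧ c = {t | P.Reach s₀ t ∧ P.Bisim s t}}

/-- The `a`-labeled step relation on bisimulation classes. -/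
def classStep (P : PDS Q Γ A) (a : A) (c d : Set (Q × SC Γ)) : Prop :=
  ∃ s ∈ c, ∃ t ∈ d, P.Step a s t

end PDS

/-- `StackGrowth` of a single transition: `|γ| − 1`. -/
def tGrowth {Q Γ A : Type} (δ : Q × Γ × A × Q × List Γ) : ℤ := (δ.2.2.2.2.length : ℤ) - 1

/-- `StackGrowth` of a run. -/
def runGrowth {Q Γ A : Type} (ρ : List (Q × Γ × A × Q × List Γ)) : ℤ := (ρ.map tGrowth).sum

/-- A run is augmenting if every prefix has nonnegative stack growth. -/
def Augmenting {Q Γ A : Type} (ρ : List (Q × Γ × A × Q × List Γ)) : Prop :=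
  ∀ i ≤ ρ.length, 0 ≤ runGrowth (ρ.take i)

/-- A digging sequence `(r 0, …, r h)` for `(q, α, β)`. -/
def DiggingSeq {Q Γ A : Type} (P : PDS Q Γ A) (q : Q) (α β : List Γ)
    (h : ℕ) (r : ℕ → Q) : Prop :=
  r 0 ∈ P.eats α {q} ∧ ∀ d, 1 ≤ d → d ≤ h → r d ∈ P.eats β {r (d - 1)}

/-- A `β^ω`-avoiding digging sequence `(r 0, …, r h)` for `(q, α, β)`,
with respect to the configuration `qαβ^eγ` (where `e ≥ 1`). -/
def Avoiding {Q Γ A : Type} (P : PDS Q Γ A) (q : Q) (α β γ : List Γ) (hβ : β ≠ [])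
    (e h : ℕ) (r : ℕ → Q) : Prop :=
  DiggingSeq P q α β h r ∧
  (∃ r' ∈ P.eats β {r 0},
      ¬ P.Bisim (r', Sum.inl (listPow β (e - 1) ++ γ)) (r', cycSC β hβ)) ∧
  ∀ d, 1 ≤ d → d ≤ h →
    ¬ P.Bisim (r d, Sum.inl (listPow β (e - d) ++ γ)) (r d, cycSC β hβ)

/-- The class of elementary functions `ℕ^k → ℕ`: the smallest class containing
constants, projections, addition, multiplication and exponentiation, and closed
under composition. -/
inductive ElementaryFun : {k : ℕ} → ((Fin k → ℕ) → ℕ) → Prop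
  | const {k : ℕ} (c : ℕ) : ElementaryFun (fun _ : Fin k → ℕ => c)
  | proj {k : ℕ} (i : Fin k) : ElementaryFun (fun v : Fin k → ℕ => v i)
  | add : ElementaryFun (fun v : Fin 2 → ℕ => v 0 + v 1)
  | mul : ElementaryFun (fun v : Fin 2 → ℕ => v 0 * v 1)
  | exp : ElementaryFun (fun v : Fin 2 → ℕ => v 0 ^ v 1)
  | comp {k m : ℕ} (f : (Fin m → ℕ) → ℕ) (g : Fin m → (Fin k → ℕ) → ℕ) :
      ElementaryFun f → (∀ i, ElementaryFun (g i)) →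
      ElementaryFun (fun v : Fin k → ℕ => f (fun i => g i v))

/-- A binary function `ℕ² → ℕ` is elementary. -/
def Elementary2 (φ : ℕ → ℕ → ℕ) : Prop :=
  ElementaryFun (fun v : Fin 2 → ℕ => φ (v 0) (v 1))

/-- A ternary function `ℕ³ → ℕ` is elementary. -/
def Elementary3 (φ : ℕ → ℕ → ℕ → ℕ) : Prop :=
  ElementaryFun (fun v : Fin 3 → ℕ => φ (v 0) (v 1) (v 2))

/-- `prodSeg w i len = w (i+1) * w (i+2) * ⋯ * w (i+len+1)` in a semigroup. -/
def prodSeg {S : Type} [Semigroup S] (w : ℕ → S) (i : ℕ) : ℕ → S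
  | 0 => w (i + 1)
  | len + 1 => prodSeg w i len * w (i + len + 2)

/-- `catSeg α i len = α (i+1) ++ α (i+2) ++ ⋯ ++ α (i+len+1)`. -/
def catSeg {Γ : Type} (α : ℕ → List Γ) (i : ℕ) : ℕ → List Γ
  | 0 => α (i + 1)
  | len + 1 => catSeg α i len ++ α (i + len + 2)


/-! ### Auxiliary lemmas -/

namespace SC

@[simp] lemma push_inl {Γ : Type} (l m : List Γ) : push l (Sum.inl m) = Sum.inl (l ++ m) := rfl

@[simp] lemma push_inr {Γ : Type} (l : List Γ) (s : Stream' Γ) :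
    push l (Sum.inr s) = Sum.inr (l ++ₛ s) := rfl

@[simp] lemma cons_inl {Γ : Type} (X : Γ) (l : List Γ) : cons X (Sum.inl l) = Sum.inl (X :: l) := rfl

@[simp] lemma cons_inr {Γ : Type} (X : Γ) (s : Stream' Γ) :
    cons X (Sum.inr s) = Sum.inr (Stream'.cons X s) := rfl

@[simp] lemma push_nil {Γ : Type} (σ : SC Γ) : push [] σ = σ := by
  cases σ with
  | inl l => rfl
  | inr s => exact congrArg Sum.inr (Stream'.nil_append_stream s)

lemma push_append {Γ : Type} (l m : List Γ) (σ : SC Γ) :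
    push (l ++ m) σ = push l (push m σ) := by
  cases σ with
  | inl x => simp [List.append_assoc]; rfl
  | inr s => simp [Stream'.append_append_stream]; rfl

lemma push_cons {Γ : Type} (X : Γ) (l : List Γ) (σ : SC Γ) :
    push (X :: l) σ = cons X (push l σ) := by
  cases σ with
  | inl x => rfl
  | inr s => simp [Stream'.cons_append_stream]; rfl

end SC

lemma push_cycSC {Γ : Type} (β : List Γ) (hβ : β ≠ []) :
    SC.push β (cycSC β hβ) = cycSC β hβ := by
  simp only [cycSC, SC.push_inr]
  exact congrArg Sum.inr (Stream'.cycle_eq β hβ).symm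

lemma listPow_succ {Γ : Type} (β : List Γ) (n : ℕ) :
    listPow β (n + 1) = β ++ listPow β n := rfl

lemma listPow_add {Γ : Type} (β : List Γ) (m n : ℕ) :
    listPow β (m + n) = listPow β m ++ listPow β n := by
  induction m with
  | zero => simp [listPow]
  | succ m ih =>
      have : m + 1 + n = (m + n) + 1 := by omega
      rw [this, listPow_succ, listPow_succ, ih, List.append_assoc]

lemma listPow_ne_nil {Γ : Type} (β : List Γ) (hβ : β ≠ []) {g : ℕ} (hg : 1 ≤ g) :
    listPow β g ≠ [] := by
  obtain ⟨g', rfl⟩ : ∃ g', g = g' + 1 := ⟨g - 1, by omega⟩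
  rw [listPow_succ]
  simp [hβ]

lemma push_listPow_cycSC {Γ : Type} (β : List Γ) (hβ : β ≠ []) (g : ℕ) :
    SC.push (listPow β g) (cycSC β hβ) = cycSC β hβ := by
  induction g with
  | zero => simp [listPow]
  | succ g ih => rw [listPow_succ, SC.push_append, ih, push_cycSC]

namespace PDS

variable {Q Γ A : Type} {P : PDS Q Γ A}

/-! ### Bisimilarity basics -/

lemma IsBisim.bisim {R} (hR : P.IsBisim R) {s t} (h : R s t) : P.Bisim s t := ⟨R, hR, h⟩

lemma isBisim_eq : P.IsBisim (· = ·) := by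
  rintro s t rfl a
  exact ⟨fun s' h => ⟨s', h, rfl⟩, fun t' h => ⟨t', h, rfl⟩⟩

lemma Bisim.refl (s : Q × SC Γ) : P.Bisim s s := ⟨_, isBisim_eq, rfl⟩

lemma Bisim.symm {s t} (h : P.Bisim s t) : P.Bisim t s := by
  obtain ⟨R, hR, hst⟩ := h
  refine ⟨fun a b => R b a, ?_, hst⟩
  intro s t h a
  exact ⟨fun s' hs => (hR t s h a).2 s' hs |>.imp fun t' ⟨h1, h2⟩ => ⟨h1, h2⟩,
         fun t' ht => (hR t s h a).1 t' ht |>.imp fun s' ⟨h1, h2⟩ => ⟨h1, h2⟩⟩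

lemma Bisim.trans {s t u} (h1 : P.Bisim s t) (h2 : P.Bisim t u) : P.Bisim s u := by
  obtain ⟨R1, hR1, h1⟩ := h1
  obtain ⟨R2, hR2, h2⟩ := h2
  refine ⟨fun x z => ∃ y, R1 x y ∧ R2 y z, ?_, t, h1, h2⟩
  rintro x z ⟨y, hxy, hyz⟩ a
  constructor
  · intro x' hx
    obtain ⟨y', hy, hxy'⟩ := (hR1 x y hxy a).1 x' hx
    obtain ⟨z', hz, hyz'⟩ := (hR2 y z hyz a).1 y' hy
    exact ⟨z', hz, y', hxy', hyz'⟩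
  · intro z' hz
    obtain ⟨y', hy, hyz'⟩ := (hR2 y z hyz a).2 z' hz
    obtain ⟨x', hx, hxy'⟩ := (hR1 x y hxy a).2 y' hy
    exact ⟨x', hx, y', hxy', hyz'⟩

lemma isBisim_bisim : P.IsBisim P.Bisim := by
  rintro s t ⟨R, hR, hst⟩ a
  constructor
  · intro s' hs
    obtain ⟨t', ht, h⟩ := (hR s t hst a).1 s' hs
    exact ⟨t', ht, R, hR, h⟩
  · intro t' ht
    obtain ⟨s', hs, h⟩ := (hR s t hst a).2 t' ht
    exact ⟨s', hs, R, hR, h⟩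

lemma Bisim.step_fwd {s t s' a} (h : P.Bisim s t) (hs : P.Step a s s') :
    ∃ t', P.Step a t t' ∧ P.Bisim s' t' :=
  (isBisim_bisim s t h a).1 s' hs

lemma Bisim.step_bwd {s t t' a} (h : P.Bisim s t) (ht : P.Step a t t') :
    ∃ s', P.Step a s s' ∧ P.Bisim s' t' :=
  (isBisim_bisim s t h a).2 t' ht

/-! ### Step inversion -/

lemma mkStep {p : Q} {X : Γ} {a : A} {q : Q} {ρ : List Γ} (h : (p, X, a, q, ρ) ∈ P.Δ)
    (σ : SC Γ) : P.Step a (p, SC.cons X σ) (q, SC.push ρ σ) :=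
  ⟨p, X, q, ρ, σ, h, rfl, rfl⟩

lemma step_inv_inl {p : Q} {l : List Γ} {a : A} {t : Q × SC Γ}
    (h : P.Step a (p, Sum.inl l) t) :
    ∃ X ρ q δl, l = X :: ρ ∧ (p, X, a, q, δl) ∈ P.Δ ∧ t = (q, Sum.inl (δl ++ ρ)) := by
  obtain ⟨p', X, q, δl, σ, hΔ, hs, ht⟩ := h
  have hp : p = p' := congrArg Prod.fst hs
  have hstack : Sum.inl l = SC.cons X σ := congrArg Prod.snd hs
  subst hp
  cases σ with
  | inl ρ =>
      rw [SC.cons_inl] at hstack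
      obtain rfl := Sum.inl.inj hstack
      exact ⟨X, ρ, q, δl, rfl, hΔ, ht⟩
  | inr s =>
      rw [SC.cons_inr] at hstack
      exact absurd hstack (by simp)

lemma step_inv_inr {p : Q} {X : Γ} {st : Stream' Γ} {a : A} {t : Q × SC Γ}
    (h : P.Step a (p, SC.cons X (Sum.inr st)) t) :
    ∃ q δl, (p, X, a, q, δl) ∈ P.Δ ∧ t = (q, SC.push δl (Sum.inr st)) := by
  obtain ⟨p', X', q, δl, σ, hΔ, hs, ht⟩ := h
  have hp : p = p' := congrArg Prod.fst hs
  have hstack : SC.cons X (Sum.inr st) = SC.cons X' σ := congrArg Prod.snd hs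
  subst hp
  cases σ with
  | inl ρ =>
      rw [SC.cons_inl, SC.cons_inr] at hstack
      exact absurd hstack (by simp)
  | inr s =>
      rw [SC.cons_inr, SC.cons_inr] at hstack
      have hst := Sum.inr.inj hstack
      have hX : X = X' := by
        have := congrArg Stream'.head hst
        simpa [Stream'.head_cons] using this
      have hs' : st = s := by
        have := congrArg Stream'.tail hst
        simpa [Stream'.tail_cons] using this
      subst hX; subst hs'
      exact ⟨q, δl, hΔ, ht⟩

end PDS

namespace PDS

variable {Q Γ A : Type} {P : PDS Q Γ A}

/-! ### Reach: lifting and splitting runs -/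

private lemma reach_lift_aux {m : Q} {x : Q × SC Γ}
    (h : P.Reach x (m, Sum.inl [])) :
    ∀ p η, x = (p, Sum.inl η) → ∀ l : List Γ,
      P.Reach (p, Sum.inl (η ++ l)) (m, Sum.inl l) := by
  induction h using Relation.ReflTransGen.head_induction_on with
  | refl =>
      rintro p η hx l
      obtain ⟨rfl, hstack⟩ : m = p ∧ (Sum.inl [] : SC Γ) = Sum.inl η :=
        ⟨congrArg Prod.fst hx, congrArg Prod.snd hx⟩
      obtain rfl : ([] : List Γ) = η := Sum.inl.inj hstack
      exact Relation.ReflTransGen.refl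
  | @head x c h' _ ih =>
      rintro p η rfl l
      obtain ⟨a, hstep⟩ := h'
      obtain ⟨X, ρ, q', δl, rfl, hΔ, rfl⟩ := step_inv_inl hstep
      have step2 : P.StepAny (p, Sum.inl ((X :: ρ) ++ l)) (q', Sum.inl (δl ++ (ρ ++ l))) := by
        refine ⟨a, ?_⟩
        have := mkStep hΔ (Sum.inl (ρ ++ l))
        simpa using this
      have ihr := ih q' (δl ++ ρ) rfl l
      rw [List.append_assoc] at ihr
      exact Relation.ReflTransGen.head step2 ihr

lemma reach_lift {p m : Q} {η : List Γ}
    (h : P.Reach (p, Sum.inl η) (m, Sum.inl [])) (l : List Γ) :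
    P.Reach (p, Sum.inl (η ++ l)) (m, Sum.inl l) :=
  reach_lift_aux h p η rfl l

private lemma reach_split_aux {m : Q} {l : List Γ} {x : Q × SC Γ}
    (h : P.Reach x (m, Sum.inl [])) :
    ∀ p η, x = (p, Sum.inl (η ++ l)) →
      ∃ w, P.Reach (p, Sum.inl η) (w, Sum.inl []) ∧ P.Reach (w, Sum.inl l) (m, Sum.inl []) := by
  induction h using Relation.ReflTransGen.head_induction_on with
  | refl =>
      rintro p η hx
      obtain ⟨rfl, hstack⟩ : m = p ∧ (Sum.inl [] : SC Γ) = Sum.inl (η ++ l) :=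
        ⟨congrArg Prod.fst hx, congrArg Prod.snd hx⟩
      obtain ⟨rfl, rfl⟩ := List.append_eq_nil_iff.mp (Sum.inl.inj hstack).symm
      exact ⟨_, Relation.ReflTransGen.refl, Relation.ReflTransGen.refl⟩
  | @head x c h' hrest ih =>
      intro p η hx
      subst hx
      cases η with
      | nil =>
          refine ⟨p, Relation.ReflTransGen.refl, ?_⟩
          exact Relation.ReflTransGen.head h' hrest
      | cons X ρ =>
          obtain ⟨a, hstep⟩ := h'
          have hstep' : P.Step a (p, Sum.inl (X :: (ρ ++ l))) c := by exact hstep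
          obtain ⟨X', ρ', q', δl, hcons, hΔ, rfl⟩ := step_inv_inl hstep'
          injection hcons with h1 h2
          subst h1
          obtain ⟨w, hw1, hw2⟩ := ih q' (δl ++ ρ) (by rw [List.append_assoc, h2])
          refine ⟨w, ?_, hw2⟩
          have step1 : P.StepAny (p, Sum.inl (X :: ρ)) (q', Sum.inl (δl ++ ρ)) := by
            refine ⟨a, ?_⟩
            have := mkStep hΔ (Sum.inl ρ)
            simpa using this
          exact Relation.ReflTransGen.head step1 hw1

lemma reach_split {p m : Q} {η l : List Γ}
    (h : P.Reach (p, Sum.inl (η ++ l)) (m, Sum.inl [])) :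
    ∃ w, P.Reach (p, Sum.inl η) (w, Sum.inl []) ∧ P.Reach (w, Sum.inl l) (m, Sum.inl []) :=
  reach_split_aux h p η rfl

end PDS

namespace PDS

variable {Q Γ A : Type} {P : PDS Q Γ A}

/-! ### eats lemmas -/

lemma mem_eats_singleton {κ : List Γ} {w r : Q} :
    r ∈ P.eats κ {w} ↔ P.Reach (w, Sum.inl κ) (r, Sum.inl []) := by
  simp [eats]

lemma eats_mono {κ : List Γ} {T T' : Set Q} (h : T ⊆ T') : P.eats κ T ⊆ P.eats κ T' := by
  rintro r ⟨q, hq, hre⟩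
  exact ⟨q, h hq, hre⟩

lemma eats_comp (κ l : List Γ) (T : Set Q) :
    P.eats (κ ++ l) T = P.eats l (P.eats κ T) := by
  ext r
  constructor
  · rintro ⟨q, hq, hre⟩
    obtain ⟨w, h1, h2⟩ := reach_split hre
    exact ⟨w, ⟨q, hq, h1⟩, h2⟩
  · rintro ⟨w, ⟨q, hq, h1⟩, h2⟩
    exact ⟨q, hq, Relation.ReflTransGen.trans (reach_lift h1 l) h2⟩

lemma eats_listPow_all {β : List Γ} (hββ : P.eats β = P.eats (β ++ β)) (g : ℕ) (hg : 1 ≤ g) :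
    ∀ T : Set Q, P.eats (listPow β g) T = P.eats β T := by
  induction g with
  | zero => omega
  | succ g ih =>
      intro T
      rcases Nat.eq_or_lt_of_le hg with h1 | h1
      · have : g = 0 := by omega
        subst this
        simp [listPow]
      · have hg1 : 1 ≤ g := by omega
        calc P.eats (listPow β (g + 1)) T = P.eats (listPow β g) (P.eats β T) := by
              rw [listPow_succ, eats_comp]
          _ = P.eats β (P.eats β T) := ih hg1 _
          _ = P.eats (β ++ β) T := (eats_comp β β T).symm
          _ = P.eats β T := by rw [← hββ]

lemma eats_listPow {β : List Γ} (hββ : P.eats β = P.eats (β ++ β)) {g : ℕ} (hg : 1 ≤ g)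
    (T : Set Q) : P.eats (listPow β g) T = P.eats β T := eats_listPow_all hββ g hg T

lemma eats_beta_closed {β : List Γ} (hββ : P.eats β = P.eats (β ++ β)) {T : Set Q} {w : Q}
    (hw : w ∈ P.eats β T) : P.eats β {w} ⊆ P.eats β T := by
  have h1 : P.eats β {w} ⊆ P.eats β (P.eats β T) :=
    eats_mono (Set.singleton_subset_iff.mpr hw)
  rw [← eats_comp, ← hββ] at h1
  exact h1

end PDS

namespace PDS

variable {Q Γ A : Type} {P : PDS Q Γ A}

/-! ### The game lemma -/

lemma game {β γ : List Γ} (hβ : β ≠ []) (J : ℕ) (Seed : Q → List Γ → Prop)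
    (H2 : ∀ w κ, Seed w κ → ∀ w', w' ∈ P.eats κ {w} →
      P.Bisim (w', Sum.inl (listPow β J ++ γ)) (w', cycSC β hβ) ∨
      ∃ κ', Seed w' κ' ∧ κ' ≠ [] ∧ SC.push κ' (cycSC β hβ) = cycSC β hβ ∧
        P.Bisim (w', Sum.inl (listPow β J ++ γ)) (w', Sum.inl (κ' ++ (listPow β J ++ γ)))) :
    ∀ w κ, Seed w κ →
      P.Bisim (w, Sum.inl (κ ++ (listPow β J ++ γ))) (w, SC.push κ (cycSC β hβ)) := by
  set μ : List Γ := listPow β J ++ γ with hμ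
  let Rel : (Q × SC Γ) → (Q × SC Γ) → Prop := fun s t =>
    ∃ w κ, Seed w κ ∧ ∃ w' σ, P.Reach (w, Sum.inl κ) (w', Sum.inl σ) ∧
      P.Bisim s (w', Sum.inl (σ ++ μ)) ∧ t = (w', SC.push σ (cycSC β hβ))
  have red : ∀ s t, Rel s t → P.Bisim s t ∨
      (∃ w κ, Seed w κ ∧ ∃ w' X σb, P.Reach (w, Sum.inl κ) (w', Sum.inl (X :: σb)) ∧
        P.Bisim s (w', Sum.inl ((X :: σb) ++ μ)) ∧
        t = (w', SC.push (X :: σb) (cycSC β hβ))) := by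
    rintro s t ⟨w, κ, hseed, w', σ, hre, hsim, rfl⟩
    cases σ with
    | nil =>
        have hw' : w' ∈ P.eats κ {w} := mem_eats_singleton.mpr hre
        rcases H2 w κ hseed w' hw' with hL | ⟨κ', hs', hne, hpu, hgood⟩
        · left
          have h1 : P.Bisim s (w', Sum.inl μ) := by simpa using hsim
          have h2 := h1.trans hL
          simpa [SC.push_nil] using h2
        · right
          obtain ⟨X, σb, rfl⟩ : ∃ X σb, κ' = X :: σb := by
            cases κ' with
            | nil => exact absurd rfl hne
            | cons X σb => exact ⟨X, σb, rfl⟩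
          refine ⟨w', X :: σb, hs', w', X, σb, Relation.ReflTransGen.refl, ?_, ?_⟩
          · have h1 : P.Bisim s (w', Sum.inl μ) := by simpa using hsim
            exact h1.trans hgood
          · rw [SC.push_nil, hpu]
    | cons X σb => exact Or.inr ⟨w, κ, hseed, w', X, σb, hre, hsim, rfl⟩
  have bcase : ∀ s t, P.Bisim s t → ∀ a,
      (∀ s', P.Step a s s' → ∃ t', P.Step a t t' ∧ (Rel s' t' ∨ P.Bisim s' t')) ∧
      (∀ t', P.Step a t t' → ∃ s', P.Step a s s' ∧ (Rel s' t' ∨ P.Bisim s' t')) := by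
    intro s t hb a
    constructor
    · intro s' hs
      obtain ⟨t', h1, h2⟩ := hb.step_fwd hs
      exact ⟨t', h1, Or.inr h2⟩
    · intro t' ht
      obtain ⟨s', h1, h2⟩ := hb.step_bwd ht
      exact ⟨s', h1, Or.inr h2⟩
  have main : P.IsBisim (fun s t => Rel s t ∨ P.Bisim s t) := by
    intro s t h a
    rcases h with hrel | hbis
    · rcases red s t hrel with hbis | ⟨w, κ, hseed, w', X, σb, hre, hsim, rfl⟩
      · exact bcase s t hbis a
      · constructor
        · -- forward
          intro s' hs'
          obtain ⟨th, hstept, hsim'⟩ := hsim.step_fwd hs'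
          have hs2 : P.Step a (w', Sum.inl (X :: (σb ++ μ))) th := by
            simpa using hstept
          obtain ⟨X', ρ', q', δl, hcons, hΔ, rfl⟩ := step_inv_inl hs2
          injection hcons with h1 h2
          subst h1
          subst h2
          refine ⟨(q', SC.push (δl ++ σb) (cycSC β hβ)), ?_, Or.inl ?_⟩
          · rw [SC.push_cons, SC.push_append]
            exact mkStep hΔ _
          · refine ⟨w, κ, hseed, q', δl ++ σb, ?_, ?_, rfl⟩
            · refine Relation.ReflTransGen.tail hre ⟨a, ?_⟩
              have := mkStep hΔ (Sum.inl σb)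
              simpa using this
            · rw [List.append_assoc]
              exact hsim'
        · -- backward
          intro t' ht'
          have ht2 : P.Step a (w', SC.cons X (Sum.inr (σb ++ₛ Stream'.cycle β hβ))) t' := by
            have hpu : SC.push (X :: σb) (cycSC β hβ)
                = SC.cons X (Sum.inr (σb ++ₛ Stream'.cycle β hβ)) := by
              rw [SC.push_cons]; rfl
            rwa [hpu] at ht'
          obtain ⟨q', δl, hΔ, rfl⟩ := step_inv_inr ht2
          have hmir : P.Step a (w', Sum.inl ((X :: σb) ++ μ)) (q', Sum.inl (δl ++ (σb ++ μ))) := by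
            have := mkStep hΔ (Sum.inl (σb ++ μ))
            simpa using this
          obtain ⟨s', hs', hsim'⟩ := hsim.step_bwd hmir
          refine ⟨s', hs', Or.inl ⟨w, κ, hseed, q', δl ++ σb, ?_, ?_, ?_⟩⟩
          · refine Relation.ReflTransGen.tail hre ⟨a, ?_⟩
            have := mkStep hΔ (Sum.inl σb)
            simpa using this
          · rw [List.append_assoc]
            exact hsim'
          · rw [SC.push_append]
            rfl
    · exact bcase s t hbis a
  intro w κ hseed
  exact ⟨fun s t => Rel s t ∨ P.Bisim s t, main,
    Or.inl ⟨w, κ, hseed, w, κ, Relation.ReflTransGen.refl, Bisim.refl _, rfl⟩⟩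

end PDS

namespace PDS

variable {Q Γ A : Type} {P : PDS Q Γ A}

/-- The dichotomy extraction lemma: if `x` with `α₀β^Jγ` on the stack is not
bisimilar to `x` with `α₀β^ω`, then some `y ∈ eats_{α₀}(x)` both avoids `β^ω`
at level `J` and is "fresh" at level `J` (no bisimilar higher copy). -/
lemma dicho {β γ : List Γ} (hβ : β ≠ []) (hββ : P.eats β = P.eats (β ++ β))
    {α₀ : List Γ} {x : Q} (J : ℕ)
    (hclose : ∀ w ∈ P.eats α₀ {x}, P.eats β {w} ⊆ P.eats α₀ {x})
    (hav : ¬ P.Bisim (x, Sum.inl (α₀ ++ (listPow β J ++ γ))) (x, SC.push α₀ (cycSC β hβ))) :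
    ∃ y ∈ P.eats α₀ {x},
      (¬ P.Bisim (y, Sum.inl (listPow β J ++ γ)) (y, cycSC β hβ)) ∧
      ∀ g, 1 ≤ g → ¬ P.Bisim (y, Sum.inl (listPow β J ++ γ))
        (y, Sum.inl (listPow β (J + g) ++ γ)) := by
  by_contra hcon
  push_neg at hcon
  have hd : ∀ y ∈ P.eats α₀ {x},
      P.Bisim (y, Sum.inl (listPow β J ++ γ)) (y, cycSC β hβ) ∨
      ∃ g, 1 ≤ g ∧ P.Bisim (y, Sum.inl (listPow β J ++ γ))
        (y, Sum.inl (listPow β (J + g) ++ γ)) := by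
    intro y hy
    by_cases hb : P.Bisim (y, Sum.inl (listPow β J ++ γ)) (y, cycSC β hβ)
    · exact Or.inl hb
    · obtain ⟨g, hg1, hg2⟩ := hcon y hy hb
      exact Or.inr ⟨g, hg1, hg2⟩
  -- apply the game
  have hH2 : ∀ w κ, ((w = x ∧ κ = α₀) ∨
      (w ∈ P.eats α₀ {x} ∧ ∃ g, 1 ≤ g ∧ κ = listPow β g)) → ∀ w', w' ∈ P.eats κ {w} →
      P.Bisim (w', Sum.inl (listPow β J ++ γ)) (w', cycSC β hβ) ∨
      ∃ κ', ((w' = x ∧ κ' = α₀) ∨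
        (w' ∈ P.eats α₀ {x} ∧ ∃ g, 1 ≤ g ∧ κ' = listPow β g)) ∧ κ' ≠ [] ∧
        SC.push κ' (cycSC β hβ) = cycSC β hβ ∧
        P.Bisim (w', Sum.inl (listPow β J ++ γ))
          (w', Sum.inl (κ' ++ (listPow β J ++ γ))) := by
    have key : ∀ w', w' ∈ P.eats α₀ {x} →
        P.Bisim (w', Sum.inl (listPow β J ++ γ)) (w', cycSC β hβ) ∨
        ∃ κ', ((w' = x ∧ κ' = α₀) ∨
          (w' ∈ P.eats α₀ {x} ∧ ∃ g, 1 ≤ g ∧ κ' = listPow β g)) ∧ κ' ≠ [] ∧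
          SC.push κ' (cycSC β hβ) = cycSC β hβ ∧
          P.Bisim (w', Sum.inl (listPow β J ++ γ))
            (w', Sum.inl (κ' ++ (listPow β J ++ γ))) := by
      intro w' hmem
      rcases hd w' hmem with hL | ⟨g', hg', hgood⟩
      · exact Or.inl hL
      · refine Or.inr ⟨listPow β g', Or.inr ⟨hmem, g', hg', rfl⟩,
          listPow_ne_nil β hβ hg', push_listPow_cycSC β hβ g', ?_⟩
        have hrw : listPow β (J + g') ++ γ = listPow β g' ++ (listPow β J ++ γ) := by
          rw [Nat.add_comm J g', listPow_add, List.append_assoc]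
        rwa [hrw] at hgood
    rintro w κ (⟨rfl, rfl⟩ | ⟨hw, g, hg, rfl⟩) w' hw'
    · exact key w' hw'
    · exact key w' (hclose w hw (by rwa [eats_listPow hββ hg] at hw'))
  exact hav (P.game hβ J _ hH2 x α₀ (Or.inl ⟨rfl, rfl⟩))

end PDS

set_option maxHeartbeats 1000000 in
/-- With `ι n k = n·k·((n+k)^n + 1)`: for every PDS in push-pop normal form, every
linked pair `(α, β)` and every configuration `qαβ^eγ` (`e ≥ 1`) with
`qαβ^{e−d}γ ≁ qαβ^ω` for all `d ∈ [1, e]`, there is a `β^ω`-avoiding digging sequence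
`(r₀, …, r_e)` for `(q, α, β)` such that for every `k` and every interval
`[a, b] ⊆ [0, e]` with `b − a + 1 > ι |P| k` there are more than `k` pairwise
non-bisimilar configurations in `{ r_d β^{e−d} γ | d ∈ [a, b] }`. -/
theorem stmt_14 (Q Γ A : Type) [Fintype Q] [Fintype Γ] [Fintype A]
    (P : PDS Q Γ A) (hpp : P.PushPop) (q : Q) (α β γ : List Γ) (hβ : β ≠ [])
    (hlp : P.LinkedPair α β) (e : ℕ) (he : 1 ≤ e)
    (hnotbis : ∀ d, 1 ≤ d → d ≤ e →
      ¬ P.Bisim (q, Sum.inl (α ++ listPow β (e - d) ++ γ)) (q, SC.push α (cycSC β hβ))) :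
    ∃ r : ℕ → Q, Avoiding P q α β γ hβ e e r ∧
      ∀ (k a b : ℕ), a ≤ b → b ≤ e →
        b - a + 1 > P.size * k * ((P.size + k) ^ P.size + 1) →
        ∃ T : Finset (Q × SC Γ), T.card > k ∧
          (∀ s ∈ T, ∃ d, a ≤ d ∧ d ≤ b ∧ s = (r d, Sum.inl (listPow β (e - d) ++ γ))) ∧
          (∀ s ∈ T, ∀ t ∈ T, s ≠ t → ¬ P.Bisim s t) := by
  classical
  obtain ⟨-, hαβ, hββ⟩ := hlp
  -- the "avoid ∧ fresh" predicate at digging index d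
  set AF : Q → ℕ → Prop := fun y d =>
    (¬ P.Bisim (y, Sum.inl (listPow β (e - d) ++ γ)) (y, cycSC β hβ)) ∧
    ∀ g, 1 ≤ g → ¬ P.Bisim (y, Sum.inl (listPow β (e - d) ++ γ))
      (y, Sum.inl (listPow β (e - d + g) ++ γ)) with hAF
  -- base: some w* in eats_α(q) avoiding and fresh at level e-1
  have hcloseα : ∀ w ∈ P.eats α {q}, P.eats β {w} ⊆ P.eats α {q} := by
    intro w hw
    have h1 : P.eats β {w} ⊆ P.eats β (P.eats α {q}) :=
      PDS.eats_mono (Set.singleton_subset_iff.mpr hw)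
    rw [← PDS.eats_comp, ← congrFun hαβ] at h1
    exact h1
  have hav1 : ¬ P.Bisim (q, Sum.inl (α ++ (listPow β (e - 1) ++ γ)))
      (q, SC.push α (cycSC β hβ)) := by
    have h := hnotbis 1 le_rfl he
    rwa [List.append_assoc] at h
  obtain ⟨wst, hwα, hwav, hwfresh⟩ := P.dicho hβ hββ (e - 1) hcloseα hav1
  -- extract r₀
  obtain ⟨r0, hr0, hr0w⟩ : ∃ r0 ∈ P.eats α {q}, wst ∈ P.eats β {r0} := by
    have hw2 : wst ∈ P.eats (α ++ β) {q} := by rwa [← congrFun hαβ]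
    rw [PDS.eats_comp] at hw2
    obtain ⟨z, h1, h2⟩ := hw2
    exact ⟨z, h1, PDS.mem_eats_singleton.mpr h2⟩
  -- the inductive step
  have step : ∀ (x : Q) (d : ℕ), d + 1 ≤ e →
      (¬ P.Bisim (x, Sum.inl (listPow β (e - d) ++ γ)) (x, cycSC β hβ)) →
      ∃ y ∈ P.eats β {x}, AF y (d + 1) := by
    intro x d hde hav
    have hcloseβ : ∀ w ∈ P.eats β {x}, P.eats β {w} ⊆ P.eats β {x} :=
      fun w hw => PDS.eats_beta_closed hββ hw
    have hav' : ¬ P.Bisim (x, Sum.inl (β ++ (listPow β (e - (d + 1)) ++ γ)))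
        (x, SC.push β (cycSC β hβ)) := by
      have h1 : e - d = (e - (d + 1)) + 1 := by omega
      rw [h1, listPow_succ, List.append_assoc] at hav
      rwa [push_cycSC]
    obtain ⟨y, hy, h2, h3⟩ := P.dicho hβ hββ (e - (d + 1)) hcloseβ hav'
    exact ⟨y, hy, h2, h3⟩
  -- build the digging sequence
  have build : ∀ j, j + 1 ≤ e → ∃ r : ℕ → Q, r 0 = r0 ∧ r 1 = wst ∧
      ∀ d, 1 ≤ d → d ≤ j + 1 → (r d ∈ P.eats β {r (d - 1)} ∧ AF (r d) d) := by
    intro j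
    induction j with
    | zero =>
        intro _
        refine ⟨fun d => if d = 0 then r0 else wst, by simp, by simp, ?_⟩
        intro d h1 h2
        have hd1 : d = 1 := by omega
        subst hd1
        simp only [if_neg (by omega : (1:ℕ) ≠ 0), if_pos rfl]
        exact ⟨hr0w, hwav, hwfresh⟩
    | succ j ih =>
        intro hje
        obtain ⟨r, h0, h1, hprev⟩ := ih (by omega)
        have hAFj := (hprev (j + 1) (by omega) le_rfl).2
        obtain ⟨y, hy, hyAF⟩ := step (r (j + 1)) (j + 1) (by omega) hAFj.1
        refine ⟨Function.update r (j + 2) y, ?_, ?_, ?_⟩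
        · rw [Function.update_of_ne (by omega)]; exact h0
        · rw [Function.update_of_ne (by omega)]; exact h1
        · intro d hd1 hd2
          rcases Nat.lt_or_ge d (j + 2) with hlt | hge
          · rw [Function.update_of_ne (by omega), Function.update_of_ne (by omega)]
            exact hprev d hd1 (by omega)
          · have hd3 : d = j + 2 := by omega
            subst hd3
            rw [Function.update_self, Function.update_of_ne (by omega)]
            have : j + 2 - 1 = j + 1 := by omega
            rw [this]
            exact ⟨hy, hyAF⟩
  obtain ⟨r, h0, h1, hall⟩ := build (e - 1) (by omega)
  have he1 : e - 1 + 1 = e := by omega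
  rw [he1] at hall
  refine ⟨r, ⟨⟨by rw [h0]; exact hr0, fun d hd hde => (hall d hd hde).1⟩, ?_, ?_⟩, ?_⟩
  · -- second bullet of Avoiding
    refine ⟨r 1, ?_, ?_⟩
    · have := (hall 1 le_rfl he).1
      simpa using this
    · have := (hall 1 le_rfl he).2.1
      simpa using this
  · -- third bullet
    exact fun d hd hde => (hall d hd hde).2.1
  · -- the counting part
    intro k a b hab hbe hlen
    by_cases hk0 : k = 0
    · subst hk0
      refine ⟨{((r a, Sum.inl (listPow β (e - a) ++ γ)) : Q × SC Γ)}, by simp, ?_, ?_⟩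
      · intro s hs
        rw [Finset.mem_singleton] at hs
        exact ⟨a, le_rfl, hab, hs⟩
      · intro s hs t ht hst
        rw [Finset.mem_singleton] at hs ht
        exact absurd (hs.trans ht.symm) hst
    · have hk : 1 ≤ k := by omega
      set n := P.size with hn
      have hQpos : 0 < Fintype.card Q := Fintype.card_pos_iff.mpr ⟨q⟩
      have hQn : Fintype.card Q ≤ n := by
        rw [hn]; unfold PDS.size; omega
      have hn1 : 1 ≤ n := le_trans hQpos hQn
      set cfg : ℕ → Q × SC Γ := fun d => (r d, Sum.inl (listPow β (e - d) ++ γ)) with hcfg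
      set D : Finset ℕ := Finset.Icc (max a 1) b with hD
      have hDcard : D.card = b + 1 - max a 1 := Nat.card_Icc _ _
      have hDbig : n * k < D.card := by
        have hpow : 1 ≤ (n + k) ^ n := Nat.one_le_pow _ _ (by omega)
        have hnk : 1 ≤ n * k := Nat.mul_pos (by omega) (by omega)
        have hX : n * k + 1 ≤ n * k * ((n + k) ^ n + 1) := by
          have h2 : 2 ≤ (n + k) ^ n + 1 := by omega
          calc n * k + 1 ≤ n * k * 2 := by omega
            _ ≤ n * k * ((n + k) ^ n + 1) := Nat.mul_le_mul_left _ h2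
        rw [hDcard]
        omega
      set rep : ℕ → ℕ := fun d => sInf {d' | d' ∈ D ∧ P.Bisim (cfg d') (cfg d)} with hrep
      have hrep_mem : ∀ d ∈ D, rep d ∈ D ∧ P.Bisim (cfg (rep d)) (cfg d) := by
        intro d hd
        have hne : {d' | d' ∈ D ∧ P.Bisim (cfg d') (cfg d)}.Nonempty := ⟨d, hd, PDS.Bisim.refl _⟩
        exact Nat.sInf_mem hne
      have hrep_eq : ∀ d ∈ D, ∀ d' ∈ D, P.Bisim (cfg d) (cfg d') → rep d = rep d' := by
        intro d hd d' hd' hb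
        have hset : {x | x ∈ D ∧ P.Bisim (cfg x) (cfg d)}
            = {x | x ∈ D ∧ P.Bisim (cfg x) (cfg d')} := by
          ext x
          exact ⟨fun ⟨h1, h2⟩ => ⟨h1, h2.trans hb⟩, fun ⟨h1, h2⟩ => ⟨h1, h2.trans hb.symm⟩⟩
        simp only [hrep]
        rw [hset]
      have fresh_contra : ∀ d d', d ∈ D → d' ∈ D → d < d' → r d = r d' →
          P.Bisim (cfg d) (cfg d') → False := by
        intro d d' hd hd' hlt hreq hb
        have hmem' := Finset.mem_Icc.mp hd'
        have h1e : 1 ≤ d' := le_trans (le_max_right a 1) hmem'.1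
        have hd'e : d' ≤ e := le_trans hmem'.2 hbe
        have hfresh := (hall d' h1e hd'e).2.2
        refine hfresh (d' - d) (by omega) ?_
        have harith : e - d' + (d' - d) = e - d := by omega
        rw [harith]
        have hb' : P.Bisim (r d, Sum.inl (listPow β (e - d) ++ γ))
            (r d', Sum.inl (listPow β (e - d') ++ γ)) := hb
        rw [hreq] at hb'
        exact hb'.symm
      set Reps : Finset ℕ := D.image rep with hReps
      have hRepsD : ∀ x ∈ Reps, x ∈ D := by
        intro x hx
        obtain ⟨u, hu, rfl⟩ := Finset.mem_image.mp hx
        exact (hrep_mem u hu).1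
      have hRepsa : ∀ x ∈ Reps, a ≤ x ∧ x ≤ b := by
        intro x hx
        have := Finset.mem_Icc.mp (hRepsD x hx)
        exact ⟨le_trans (le_max_left a 1) this.1, this.2⟩
      have hrep_idem : ∀ x ∈ Reps, rep x = x := by
        intro x hx
        obtain ⟨u, hu, rfl⟩ := Finset.mem_image.mp hx
        exact hrep_eq (rep u) (hrep_mem u hu).1 u hu (hrep_mem u hu).2
      have hpair : ∀ x ∈ Reps, ∀ y ∈ Reps, x ≠ y → ¬ P.Bisim (cfg x) (cfg y) := by
        intro x hx y hy hne hb
        have h := hrep_eq x (hRepsD x hx) y (hRepsD y hy) hb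
        rw [hrep_idem x hx, hrep_idem y hy] at h
        exact hne h
      have hcard : k < Reps.card := by
        by_contra hle
        push_neg at hle
        have hmaps : ∀ d ∈ D, (r d, rep d) ∈ (Finset.univ : Finset Q) ×ˢ Reps := by
          intro d hd
          exact Finset.mem_product.mpr ⟨Finset.mem_univ _, Finset.mem_image_of_mem _ hd⟩
        have hlt : ((Finset.univ : Finset Q) ×ˢ Reps).card < D.card := by
          rw [Finset.card_product, Finset.card_univ]
          exact lt_of_le_of_lt (Nat.mul_le_mul hQn hle) hDbig
        obtain ⟨d, hd, d', hd', hne, heq⟩ :=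
          Finset.exists_ne_map_eq_of_card_lt_of_maps_to hlt hmaps
        have hr1 : r d = r d' := congrArg Prod.fst heq
        have hr2 : rep d = rep d' := congrArg Prod.snd heq
        have hbisim : P.Bisim (cfg d) (cfg d') := by
          have ha1 := (hrep_mem d hd).2
          have ha2 := (hrep_mem d' hd').2
          rw [hr2] at ha1
          exact ha1.symm.trans ha2
        rcases Nat.lt_or_ge d d' with hlt2 | hge2
        · exact fresh_contra d d' hd hd' hlt2 hr1 hbisim
        · have hlt3 : d' < d := by omega
          exact fresh_contra d' d hd' hd hlt3 hr1.symm hbisim.symm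
      have hinj : Set.InjOn cfg ↑Reps := by
        intro x hx y hy heq
        by_contra hne
        exact hpair x (Finset.mem_coe.mp hx) y (Finset.mem_coe.mp hy) hne
          (heq ▸ PDS.Bisim.refl _)
      refine ⟨Reps.image cfg, ?_, ?_, ?_⟩
      · rw [Finset.card_image_of_injOn hinj]
        exact hcard
      · intro s hs
        obtain ⟨x, hx, rfl⟩ := Finset.mem_image.mp hs
        exact ⟨x, (hRepsa x hx).1, (hRepsa x hx).2, rfl⟩
      · intro s hs t ht hst
        obtain ⟨x, hx, rfl⟩ := Finset.mem_image.mp hs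
        obtain ⟨y, hy, rfl⟩ := Finset.mem_image.mp ht
        exact hpair x hx y hy (fun h => hst (by rw [h]))
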